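/- arXiv:2401.04458 — 6 statements merged into one kernel-verified Lean document; each statement's English description precedes it below -/
import Mathlib

section
/- Let A be a commutative ring, let n and r be natural numbers, let M be an A-module, and let a_1, …, a_r be elements of A generating the unit ideal. Suppose that for each i ∈ {1, …, r}, the localization of M away from a_i (i.e. at the multiplicative set of powers of a_i) is isomorphic, as a module over the localization of A away from a_i, to the free module of rank n. Then M can be generated by n·r elements, i.e. there is a subset of M of cardinality at most n·r whose A-linear span is all of M. -/
/-- If `a 1, …, a r` generate the unit ideal of a commutative ring `A` and the localization
of an `A`-module `M` away from each `a i` is free of rank `n` over the corresponding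
localization of `A`, then `M` can be generated by `n * r` elements. -/
theorem generators_of_locally_free_module_principal_cover
    (A : Type*) [CommRing A] (n r : ℕ) (M : Type*) [AddCommGroup M] [Module A M]
    (a : Fin r → A) (ha : Ideal.span (Set.range a) = ⊤)
    (hfree : ∀ i : Fin r,
      Nonempty ((LocalizedModule (Submonoid.powers (a i)) M) ≃ₗ[Localization.Away (a i)]
        (Fin n → Localization.Away (a i)))) :
    ∃ S : Finset M, S.card ≤ n * r ∧ Submodule.span A (S : Set M) = ⊤ := by
  classical
  -- localization maps
  let f : ∀ i : Fin r, M →ₗ[A] LocalizedModule (Submonoid.powers (a i)) M :=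
    fun i => LocalizedModule.mkLinearMap (Submonoid.powers (a i)) M
  -- a generating set of size `n` for each localized module
  let e : ∀ i : Fin r, (LocalizedModule (Submonoid.powers (a i)) M)
      ≃ₗ[Localization.Away (a i)] (Fin n → Localization.Away (a i)) :=
    fun i => (hfree i).some
  let s₁ : ∀ i : Fin r, Finset (LocalizedModule (Submonoid.powers (a i)) M) :=
    fun i => Finset.univ.image
      (fun j : Fin n => (e i).symm (Pi.basisFun (Localization.Away (a i)) (Fin n) j))
  have s₂ : ∀ i : Fin r, Submodule.span (Localization.Away (a i)) ((s₁ i : Set (LocalizedModule (Submonoid.powers (a i)) M))) = ⊤ := by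
    intro i
    have hb : Submodule.span (Localization.Away (a i))
        (Set.range ⇑(Pi.basisFun (Localization.Away (a i)) (Fin n))) = ⊤ :=
      (Pi.basisFun (Localization.Away (a i)) (Fin n)).span_eq
    have h : (s₁ i : Set _) = (e i).symm '' (Set.range
        ⇑(Pi.basisFun (Localization.Away (a i)) (Fin n))) := by
      rw [← Set.range_comp]
      simp only [s₁, Finset.coe_image, Finset.coe_univ, Set.image_univ]
      rfl
    rw [h, ← LinearEquiv.coe_coe, ← Submodule.map_span, hb, Submodule.map_top]
    simp
  -- clear denominators
  let sf : ∀ i : Fin r, Finset M :=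
    fun i => IsLocalizedModule.finsetIntegerMultiple (Submonoid.powers (a i)) (f i) (s₁ i)
  refine ⟨Finset.univ.biUnion sf, ?_, ?_⟩
  · calc (Finset.univ.biUnion sf).card ≤ ∑ i : Fin r, (sf i).card := Finset.card_biUnion_le
      _ ≤ ∑ _i : Fin r, n := by
          refine Finset.sum_le_sum fun i _ => ?_
          calc (sf i).card ≤ (s₁ i).attach.card := Finset.card_image_le
            _ = (s₁ i).card := Finset.card_attach
            _ ≤ n := Finset.card_image_le.trans (by simp)
      _ = n * r := by simp [mul_comm]
  · rw [eq_top_iff]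
    rintro x -
    have hspan : Ideal.span (Set.range a) = ⊤ := ha
    rw [← Set.image_univ, ← Finset.coe_univ, ← Finset.coe_image] at hspan
    refine Submodule.mem_of_span_eq_top_of_smul_pow_mem _ _ hspan _ (fun c => ?_)
    obtain ⟨i, -, hi⟩ := Finset.mem_image.mp c.2
    set S : Submonoid A := Submonoid.powers (a i)
    obtain ⟨⟨_, n₁, rfl⟩, hn₁⟩ := multiple_mem_span_of_mem_localization_span S
      (Localization.Away (a i)) (s₁ i : Set _)
      (IsLocalizedModule.mk' (f i) x (1 : S)) (by rw [s₂ i]; trivial)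
    rw [Submonoid.smul_def, ← IsLocalizedModule.mk'_smul, IsLocalizedModule.mk'_one] at hn₁
    obtain ⟨⟨_, n₂, rfl⟩, hn₂⟩ := IsLocalizedModule.smul_mem_finsetIntegerMultiple_span
      S (f i) _ (s₁ i) hn₁
    rw [Submonoid.smul_def] at hn₂
    refine ⟨n₂ + n₁, ?_⟩
    have : (c : A) = a i := hi.symm
    rw [this, pow_add, mul_smul]
    refine Submodule.span_mono ?_ hn₂
    intro y hy
    exact Finset.mem_coe.mpr (Finset.mem_biUnion.mpr ⟨i, Finset.mem_univ i, hy⟩)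
end

section
/- Let A be a noetherian commutative ring whose Krull dimension is at most a natural number d, and let M be a finitely generated projective A-module such that for every prime ideal 𝔭 of A the localization M_𝔭 is a free module of rank n over A_𝔭. Then there exist elements a_0, a_1, …, a_d of A generating the unit ideal such that for each i, the localization of M away from a_i is isomorphic, as a module over the localization of A away from a_i, to the free module of rank n. -/
def Pgen (A : Type*) [CommRing A] (M : Type*) [AddCommGroup M] [Module A M]
    (n : ℕ) (a : A) : Prop :=
  ∃ m : Fin n → M, ∀ x : M, a • x ∈ Submodule.span A (Set.range m)

/-- Determinant-trick Nakayama-type lemma. -/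


theorem nak {A : Type*} [CommRing A] {M : Type*} [AddCommGroup M] [Module A M]
    [Module.Finite A M] (V : Submodule A M) (I : Ideal A) (u : A)
    (h : ∀ x : M, u • x ∈ V ⊔ I • (⊤ : Submodule A M)) :
    ∃ (v : A) (k : ℕ), v - u ^ k ∈ I ∧ ∀ x : M, v • x ∈ V := by
  obtain ⟨g, x, hx⟩ := Module.Finite.exists_fin (R := A) (M := M)
  -- decompose u • x j
  have key : ∀ j : Fin g, ∃ B : Fin g → A, (∀ l, B l ∈ I) ∧
      u • x j - ∑ l, B l • x l ∈ V := by
    intro j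
    obtain ⟨w, hw, y, hy, hwy⟩ := Submodule.mem_sup.mp (h (x j))
    rw [← hx] at hy
    rw [show (Set.range x) = Set.range x from rfl] at hy
    obtain ⟨c, hc, hsum⟩ := (Submodule.mem_ideal_smul_span_iff_exists_sum I x y).mp hy
    refine ⟨fun l => c l, fun l => hc l, ?_⟩
    have hcy : ∑ l, c l • x l = y := by
      rw [← hsum, Finsupp.sum_fintype]
      intro i; simp
    rw [hcy, ← hwy]
    simpa using hw
  choose B hBI hBV using key
  set C : Matrix (Fin g) (Fin g) A :=
    Matrix.diagonal (fun _ => u) - Matrix.of (fun j l => B j l) with hC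
  have hrow : ∀ j, ∑ l, C j l • x l ∈ V := by
    intro j
    have : ∑ l, C j l • x l = u • x j - ∑ l, B j l • x l := by
      rw [hC]
      simp only [Matrix.sub_apply, Matrix.diagonal_apply, Matrix.of_apply, sub_smul]
      rw [Finset.sum_sub_distrib]
      congr 1
      rw [Finset.sum_eq_single j]
      · simp
      · intro b _ hb; simp [Ne.symm hb]
      · simp
    rw [this]; exact hBV j
  refine ⟨C.det, g, ?_, ?_⟩
  · -- det C ≡ u ^ g mod I
    have : Ideal.Quotient.mk I C.det = Ideal.Quotient.mk I (u ^ g) := by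
      have hmap : C.map (Ideal.Quotient.mk I) = Matrix.diagonal (fun _ => Ideal.Quotient.mk I u) := by
        ext j l
        by_cases hjl : j = l
        · subst hjl
          simp [hC, Ideal.Quotient.eq_zero_iff_mem.mpr (hBI j j)]
        · simp [hC, Matrix.diagonal_apply, hjl,
            Ideal.Quotient.eq_zero_iff_mem.mpr (hBI j l)]
      have := RingHom.map_det (Ideal.Quotient.mk I) C
      rw [RingHom.mapMatrix_apply, hmap, Matrix.det_diagonal] at this
      rw [this]
      simp [Finset.prod_const, map_pow]
    exact (Ideal.Quotient.eq (I := I)).mp this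
  · -- det C kills M mod V
    have hdet : ∀ j, C.det • x j ∈ V := by
      intro j
      have h2 : C.det • x j = ∑ l, (C.adjugate * C) j l • x l := by
        rw [Matrix.adjugate_mul]
        rw [Finset.sum_eq_single j]
        · simp [Matrix.smul_apply, Matrix.one_apply]
        · intro b _ hb
          simp [Matrix.smul_apply, Matrix.one_apply, Ne.symm hb]
        · simp
      have h3 : ∑ l, ((C.adjugate * C) j l) • x l
          = ∑ m, C.adjugate j m • (∑ l, C m l • x l) := by
        simp only [Matrix.mul_apply, Finset.sum_smul, Finset.smul_sum, mul_smul]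
        rw [Finset.sum_comm]
      rw [h2, h3]
      exact Submodule.sum_mem _ fun m _ => Submodule.smul_mem _ _ (hrow m)
    intro y
    have : y ∈ Submodule.span A (Set.range x) := by rw [hx]; trivial
    obtain ⟨c, rfl⟩ := (Submodule.mem_span_range_iff_exists_fun A).mp this
    rw [Finset.smul_sum]
    exact Submodule.sum_mem _ fun j _ => by
      rw [smul_comm]; exact Submodule.smul_mem _ _ (hdet j)


theorem pgen_local {A : Type*} [CommRing A] {M : Type*} [AddCommGroup M] [Module A M]
    [Module.Finite A M] (n : ℕ) (p : Ideal A) [hp : p.IsPrime]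
    (e : (LocalizedModule p.primeCompl M) ≃ₗ[Localization.AtPrime p]
      (Fin n → Localization.AtPrime p)) :
    ∃ f ∉ p, Pgen A M n f := by
  classical
  set Ap := Localization.AtPrime p
  set mkL := LocalizedModule.mkLinearMap p.primeCompl M with hmkL
  -- images of the "basis" pulled back
  set y : Fin n → LocalizedModule p.primeCompl M := fun i => e.symm (Pi.basisFun Ap (Fin n) i)
    with hy
  have hyspan : Submodule.span Ap (Set.range y) = ⊤ := by
    have h1 : Submodule.span Ap (Set.range (Pi.basisFun Ap (Fin n))) = ⊤ :=
      (Pi.basisFun Ap (Fin n)).span_eq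
    have : Set.range y = (e.symm : (Fin n → Ap) →ₗ[Ap] _) '' Set.range (Pi.basisFun Ap (Fin n)) := by
      rw [← Set.range_comp]; rfl
    rw [this, ← Submodule.map_span, h1, Submodule.map_top, LinearEquiv.range]
  -- choose representatives
  have hrep : ∀ i, ∃ q : M × p.primeCompl, LocalizedModule.mk q.1 q.2 = y i := fun i =>
    LocalizedModule.induction_on (fun m s => ⟨(m, s), rfl⟩) (y i)
  choose q hq using hrep
  set x : Fin n → M := fun i => (q i).1 with hx
  set V := Submodule.span A (Set.range x) with hV
  set mkx : Fin n → LocalizedModule p.primeCompl M :=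
    fun i => LocalizedModule.mk (x i) (1 : p.primeCompl) with hmkx
  have hxspan : Submodule.span Ap (Set.range mkx) = ⊤ := by
    rw [eq_top_iff, ← hyspan, Submodule.span_le]
    rintro _ ⟨i, rfl⟩
    have : y i = Localization.mk 1 (q i).2 • mkx i := by
      rw [LocalizedModule.mk_smul_mk, one_smul, mul_one, hx, ← hq i]
    rw [this]
    exact Submodule.smul_mem _ _ (Submodule.subset_span ⟨i, rfl⟩)
  have hmk : ∀ w : M, mkL w = LocalizedModule.mk w (1 : p.primeCompl) := fun w => rfl
  -- key pointwise statement
  have key : ∀ z : M, ∃ s, s ∉ p ∧ s • z ∈ V := by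
    intro z
    have hz : LocalizedModule.mk z (1 : p.primeCompl) ∈
        Submodule.span Ap (Set.range mkx) := by
      rw [hxspan]; trivial
    obtain ⟨c, hc⟩ := (Submodule.mem_span_range_iff_exists_fun Ap).mp hz
    obtain ⟨b, hb⟩ := IsLocalization.exist_integer_multiples_of_finite p.primeCompl c
    choose d hd using hb
    have hbz : mkL ((b : A) • z - ∑ i, d i • x i) = 0 := by
      rw [map_sub, map_smul, map_sum, hmk, ← hc, Finset.smul_sum]
      have hterm : ∀ i : Fin n, (b : A) • (c i • mkx i) = mkL (d i • x i) := by
        intro i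
        rw [← smul_assoc, ← hd i, algebraMap_smul, map_smul]
        rfl
      rw [Finset.sum_congr rfl fun i _ => hterm i, sub_self]
    have : ∃ u : p.primeCompl, u • ((b : A) • z - ∑ i, d i • x i) = 0 := by
      rw [hmk] at hbz
      rw [show (0 : LocalizedModule p.primeCompl M)
        = LocalizedModule.mk 0 (1 : p.primeCompl) from (LocalizedModule.zero_mk _).symm] at hbz
      obtain ⟨u, hu⟩ := LocalizedModule.mk_eq.mp hbz
      exact ⟨u, by simpa using hu⟩
    obtain ⟨u, hu⟩ := this
    refine ⟨(u : A) * (b : A), fun hmem => ?_, ?_⟩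
    · rcases hp.mem_or_mem hmem with h | h
      · exact u.2 h
      · exact b.2 h
    · have : ((u : A) * (b : A)) • z = (u : A) • ∑ i, d i • x i := by
        rw [mul_smul]
        rw [smul_sub] at hu
        have := sub_eq_zero.mp hu
        simp only [Submonoid.smul_def] at this ⊢
        exact this
      rw [this]
      exact Submodule.smul_mem _ _ <| Submodule.sum_mem _ fun i _ =>
        Submodule.smul_mem _ _ (Submodule.subset_span ⟨i, rfl⟩)
  -- make it uniform using finitely many generators
  obtain ⟨g, zg, hzg⟩ := Module.Finite.exists_fin (R := A) (M := M)
  choose s hs1 hs2 using fun j => key (zg j)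
  classical
  refine ⟨∏ j, s j, fun hmem => ?_, x, fun w => ?_⟩
  · have : (∏ j, s j) ∈ p.primeCompl :=
      Submonoid.prod_mem _ fun j _ => hs1 j
    exact this hmem
  · have hgen : ∀ j, (∏ j, s j) • zg j ∈ V := by
      intro j
      rw [← Finset.prod_erase_mul _ _ (Finset.mem_univ j), mul_smul]
      exact Submodule.smul_mem _ _ (hs2 j)
    have hw : w ∈ Submodule.span A (Set.range zg) := by rw [hzg]; trivial
    obtain ⟨r, rfl⟩ := (Submodule.mem_span_range_iff_exists_fun A).mp hw
    rw [Finset.smul_sum]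
    exact Submodule.sum_mem _ fun j _ => by
      rw [smul_comm]
      exact Submodule.smul_mem _ _ (hgen j)


theorem step_exists {A : Type*} [CommRing A] [IsNoetherianRing A] {M : Type*}
    [AddCommGroup M] [Module A M] [Module.Finite A M] (n : ℕ)
    (H : ∀ p : Ideal A, p.IsPrime → ∃ f ∉ p, Pgen A M n f) :
    ∃ a₀ : A, (∀ p ∈ minimalPrimes A, a₀ ∉ p) ∧ Pgen A M n a₀ := by
  classical
  have hfin : (minimalPrimes A).Finite := minimalPrimes.finite_of_isNoetherianRing A
  set s : Finset (Ideal A) := hfin.toFinset with hs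
  have hmem : ∀ p, p ∈ s ↔ p ∈ minimalPrimes A := fun p => hfin.mem_toFinset
  have hprime : ∀ p ∈ s, p.IsPrime := fun p hp => ((hmem p).mp hp).1.1
  -- choose c p
  have hc : ∀ p ∈ s, ∃ c, c ∈ (s.erase p).inf id ∧ c ∉ p := by
    intro p hp
    by_contra hcon
    push_neg at hcon
    have hle : (s.erase p).inf id ≤ p := fun c hcmem => by
      by_contra hcp
      exact hcp (hcon c hcmem)
    obtain ⟨q, hq, hqp⟩ := (Ideal.IsPrime.inf_le' (hprime p hp)).mp hle
    have hqmin : q ∈ minimalPrimes A := (hmem q).mp (Finset.mem_of_mem_erase hq)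
    have hpmin : p ∈ minimalPrimes A := (hmem p).mp hp
    have : p ≤ q := hpmin.2 ⟨hqmin.1.1, bot_le⟩ hqp
    exact (Finset.ne_of_mem_erase hq) (le_antisymm hqp this)
  choose! c hc1 hc2 using hc
  -- choose f and local generators
  have hH : ∀ p ∈ s, ∃ f ∉ p, Pgen A M n f := fun p hp => H p (hprime p hp)
  choose! f hf1 hf2 using hH
  choose! mp hmp using hf2
  -- the combined generators
  set m : Fin n → M := fun j => ∑ p ∈ s, c p • mp p j with hm
  set V := Submodule.span A (Set.range m) with hV
  -- for each minimal prime p, (c p * f p) • x ∈ V ⊔ p • ⊤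
  have hkey : ∀ p ∈ s, ∀ x : M, (c p * f p) • x ∈ V ⊔ p • (⊤ : Submodule A M) := by
    intro p hp x
    have h1 : f p • x ∈ Submodule.span A (Set.range (mp p)) := hmp p hp x
    obtain ⟨r, hr⟩ := (Submodule.mem_span_range_iff_exists_fun A).mp h1
    have h2 : (c p * f p) • x = ∑ j, r j • (c p • mp p j) := by
      rw [mul_smul, ← hr, Finset.smul_sum]
      exact Finset.sum_congr rfl fun j _ => smul_comm _ _ _
    have h3 : ∀ j : Fin n, c p • mp p j = m j - ∑ q ∈ s.erase p, c q • mp q j := by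
      intro j
      simp only [hm]
      rw [← Finset.add_sum_erase s (fun q => c q • mp q j) hp]
      abel
    have h4 : ∀ q ∈ s.erase p, (c q : A) ∈ p := by
      intro q hq
      have hps : p ∈ s.erase q :=
        Finset.mem_erase.mpr ⟨fun h => (Finset.ne_of_mem_erase hq) h.symm, hp⟩
      exact (Finset.inf_le hps : (s.erase q).inf id ≤ p) (hc1 q (Finset.mem_of_mem_erase hq))
    rw [h2]
    refine Submodule.sum_mem _ fun j _ => ?_
    rw [h3 j, smul_sub]
    refine Submodule.sub_mem _ ?_ ?_
    · exact Submodule.mem_sup_left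
        (Submodule.smul_mem _ _ (Submodule.subset_span ⟨j, rfl⟩))
    · refine Submodule.mem_sup_right ?_
      refine Submodule.smul_mem _ _ (Submodule.sum_mem _ fun q hq => ?_)
      exact Submodule.smul_mem_smul (h4 q hq) trivial
  -- apply nak at each minimal prime
  choose! v k hv1 hv2 using fun p hp => nak V p (c p * f p) (hkey p hp)
  have hvp : ∀ p ∈ s, v p ∉ p := by
    intro p hp hvmem
    have hpow : (c p * f p) ^ k p ∈ p := by
      have hsub1 := hv1 p hp
      have heq : (c p * f p) ^ (k p) = v p - (v p - (c p * f p) ^ (k p)) := by ring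
      rw [heq]
      exact Submodule.sub_mem _ hvmem hsub1
    have h5 : c p * f p ∈ p := (hprime p hp).mem_of_pow_mem _ hpow
    rcases (hprime p hp).mem_or_mem h5 with h | h
    · exact hc2 p hp h
    · exact hf1 p hp h
  set J : Ideal A := V.colon ⊤ with hJ
  have hvJ : ∀ p ∈ s, v p ∈ J := fun p hp =>
    Submodule.mem_colon.mpr fun x _ => hv2 p hp x
  have hnotsub : ¬ ((J : Set A) ⊆ ⋃ p ∈ s, (p : Set A)) := by
    intro hsub
    obtain ⟨p, hp, hJp⟩ :=
      (Ideal.subset_union_prime (⊤ : Ideal A) ⊤ fun i hi _ _ => hprime i hi).mp hsub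
    exact hvp p hp (hJp (hvJ p hp))
  obtain ⟨a₀, ha₀J, ha₀p⟩ := Set.not_subset.mp hnotsub
  simp only [Set.mem_iUnion] at ha₀p
  push_neg at ha₀p
  exact ⟨a₀, fun p hp => ha₀p p ((hmem p).mpr hp), m,
    fun x => Submodule.mem_colon.mp ha₀J x trivial⟩


theorem dim_quot {A : Type*} [CommRing A] {d : ℕ}
    (hdim : ringKrullDim A ≤ ((d + 1 : ℕ) : WithBot (WithTop ℕ))) {a₀ : A}
    (ha : ∀ p ∈ minimalPrimes A, a₀ ∉ p) :
    ringKrullDim (A ⧸ Ideal.span {a₀}) ≤ ((d : ℕ) : WithBot (WithTop ℕ)) := by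
  set I := Ideal.span ({a₀} : Set A) with hI
  show Order.krullDim (PrimeSpectrum (A ⧸ I)) ≤ _
  rw [Order.krullDim]
  refine iSup_le fun l => ?_
  set F : PrimeSpectrum (A ⧸ I) → PrimeSpectrum A :=
    (PrimeSpectrum.comap (Ideal.Quotient.mk I)) with hF
  have hFmono : Monotone F := fun x y hxy => by
    rw [← PrimeSpectrum.asIdeal_le_asIdeal] at hxy ⊢
    exact Ideal.comap_mono hxy
  have hFinj : Function.Injective F :=
    PrimeSpectrum.comap_injective_of_surjective _ Ideal.Quotient.mk_surjective
  have hFstrict : StrictMono F := hFmono.strictMono_of_injective hFinj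
  set l' := l.map F hFstrict with hl'
  -- head of l' contains a₀, hence is not minimal
  have ha₀head : a₀ ∈ l'.head.asIdeal := by
    rw [hl', LTSeries.head_map, hF, PrimeSpectrum.comap_asIdeal, Ideal.mem_comap]
    rw [show Ideal.Quotient.mk I a₀ = 0 from Ideal.Quotient.eq_zero_iff_mem.mpr
      (Ideal.subset_span rfl)]
    exact zero_mem _
  obtain ⟨q, hqmin, hqle⟩ :=
    Ideal.exists_minimalPrimes_le (I := ⊥) (J := l'.head.asIdeal) bot_le
  have hqprime : q.IsPrime := hqmin.1.1
  have hqlt : (⟨q, hqprime⟩ : PrimeSpectrum A) < l'.head := by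
    refine lt_of_le_of_ne ((PrimeSpectrum.asIdeal_le_asIdeal _ _).mp hqle) ?_
    intro hcon
    apply ha q hqmin
    rw [show q = l'.head.asIdeal from congrArg PrimeSpectrum.asIdeal hcon]
    exact ha₀head
  set l'' := l'.cons ⟨q, hqprime⟩ hqlt with hl''
  have hlen : (l''.length : WithBot (WithTop ℕ)) ≤ ((d + 1 : ℕ) : WithBot (WithTop ℕ)) :=
    le_trans (Order.LTSeries.length_le_krullDim l'') hdim
  have hlen' : l''.length = l.length + 1 := by
    rw [hl'', RelSeries.cons_length, hl']; rfl
  rw [hlen'] at hlen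
  have h2 : l.length + 1 ≤ d + 1 := by exact_mod_cast hlen
  have : l.length ≤ d := Nat.le_of_succ_le_succ h2
  exact Nat.cast_le.mpr this


theorem prime_minimal_of_dim_zero {A : Type*} [CommRing A]
    (hdim : ringKrullDim A ≤ ((0 : ℕ) : WithBot (WithTop ℕ)))
    (p : Ideal A) (hp : p.IsPrime) : p ∈ minimalPrimes A := by
  obtain ⟨q, hqmin, hqle⟩ := Ideal.exists_minimalPrimes_le (I := ⊥) (J := p) bot_le
  have hqprime : q.IsPrime := hqmin.1.1
  by_cases hqp : q = p
  · rwa [← hqp]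
  exfalso
  have hlt : (⟨q, hqprime⟩ : PrimeSpectrum A) < ⟨p, hp⟩ :=
    lt_of_le_of_ne ((PrimeSpectrum.asIdeal_le_asIdeal _ _).mp hqle)
      (fun h => hqp (congrArg PrimeSpectrum.asIdeal h))
  set l := (RelSeries.singleton {(a, b) : PrimeSpectrum A × PrimeSpectrum A | a < b}
    ⟨p, hp⟩).cons ⟨q, hqprime⟩ hlt with hl
  have h1 : (l.length : WithBot (WithTop ℕ)) ≤ ((0 : ℕ) : WithBot (WithTop ℕ)) :=
    le_trans (Order.LTSeries.length_le_krullDim l) hdim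
  have h2 : l.length = 1 := rfl
  rw [h2] at h1
  have : (1 : ℕ) ≤ 0 := by exact_mod_cast h1
  omega


universe u v

theorem pgen_cover (d : ℕ) :
    ∀ (A : Type u) (M : Type v) [CommRing A] [IsNoetherianRing A] [AddCommGroup M]
      [Module A M] [Module.Finite A M] (n : ℕ),
      ringKrullDim A ≤ ((d : ℕ) : WithBot (WithTop ℕ)) →
      (∀ p : Ideal A, p.IsPrime → ∃ f ∉ p, Pgen A M n f) →
      ∃ a : Fin (d + 1) → A, Ideal.span (Set.range a) = ⊤ ∧ ∀ i, Pgen A M n (a i) := by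
  induction d with
  | zero =>
    intro A M _ _ _ _ _ n hdim H
    obtain ⟨a₀, ha₀, hP⟩ := step_exists n H
    refine ⟨fun _ => a₀, ?_, fun _ => hP⟩
    rw [Set.range_const]
    by_contra hne
    obtain ⟨mx, hmx, hle⟩ := Ideal.exists_le_maximal _ hne
    have hmxp : mx.IsPrime := hmx.isPrime
    have : mx ∈ minimalPrimes A := prime_minimal_of_dim_zero hdim mx hmxp
    exact ha₀ mx this (hle (Ideal.subset_span rfl))
  | succ d ih =>
    intro A M _ _ _ _ _ n hdim H
    classical
    obtain ⟨a₀, ha₀, hP₀⟩ := step_exists n H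
    set I : Ideal A := Ideal.span {a₀} with hI
    set A' := A ⧸ I with hA'
    set M' := M ⧸ (I • ⊤ : Submodule A M) with hM'
    set π : A →+* A' := Ideal.Quotient.mk I with hπ
    set qM : M →ₗ[A] M' := Submodule.mkQ (I • ⊤ : Submodule A M) with hqM
    haveI : IsScalarTower A A' M' := by
      constructor
      intro a b x
      obtain ⟨b, rfl⟩ := Ideal.Quotient.mk_surjective b
      obtain ⟨x, rfl⟩ := Submodule.Quotient.mk_surjective _ x
      calc (a • Ideal.Quotient.mk I b) • Submodule.Quotient.mk x
          = (Ideal.Quotient.mk I a * Ideal.Quotient.mk I b) •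
            (Submodule.Quotient.mk x : M ⧸ (I • ⊤ : Submodule A M)) := by
            rw [Algebra.smul_def, Ideal.Quotient.algebraMap_eq]
        _ = Ideal.Quotient.mk I (a * b) • Submodule.Quotient.mk x := by rw [map_mul]
        _ = Submodule.Quotient.mk ((a * b) • x) := rfl
        _ = Submodule.Quotient.mk (a • (b • x)) := by rw [mul_smul]
        _ = a • (Ideal.Quotient.mk I b • Submodule.Quotient.mk x) := rfl
    haveI : Module.Finite A M' := Module.Finite.of_surjective qM (Submodule.mkQ_surjective _)
    haveI : Module.Finite A' M' := Module.Finite.of_restrictScalars_finite A A' M'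
    -- smul compatibility
    have hsmul : ∀ (a : A) (x : M), π a • (qM x : M') = qM (a • x) := fun a x => rfl
    have hAsmul : ∀ (a : A) (y : M'), a • y = π a • y := by
      intro a y
      obtain ⟨x, rfl⟩ := Submodule.Quotient.mk_surjective _ y
      rfl
    -- transfer the local hypothesis
    have H' : ∀ p' : Ideal A', p'.IsPrime → ∃ f' ∉ p', Pgen A' M' n f' := by
      intro p' hp'
      set p : Ideal A := Ideal.comap π p' with hp
      haveI : p.IsPrime := Ideal.IsPrime.comap π (hK := hp')
      obtain ⟨f, hfp, mf, hmf⟩ := H p inferInstance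
      refine ⟨π f, by rwa [hp, Ideal.mem_comap] at hfp, fun i => qM (mf i), ?_⟩
      intro x'
      obtain ⟨x, rfl⟩ := Submodule.Quotient.mk_surjective _ x'
      have h1 : π f • (qM x : M') = qM (f • x) := hsmul f x
      have h2 : qM (f • x) ∈ Submodule.map qM (Submodule.span A (Set.range mf)) :=
        Submodule.mem_map_of_mem (hmf x)
      rw [Submodule.map_span, ← Set.range_comp] at h2
      have h3 : Submodule.span A (Set.range (qM ∘ mf)) ≤
          Submodule.restrictScalars A (Submodule.span A' (Set.range (qM ∘ mf))) := by
        rw [Submodule.span_le]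
        intro y hy
        exact Submodule.subset_span hy
      exact h1 ▸ h3 h2
    have hdim' : ringKrullDim A' ≤ ((d : ℕ) : WithBot (WithTop ℕ)) := dim_quot hdim ha₀
    obtain ⟨abar, habarspan, habarP⟩ := ih A' M' n hdim' H'
    -- lift everything
    choose b hb using fun j => Ideal.Quotient.mk_surjective (abar j)
    choose mb hmb using fun j => habarP j
    choose ml hml using fun (j : Fin (d + 1)) (i : Fin n) =>
      Submodule.Quotient.mk_surjective (I • ⊤ : Submodule A M) (mb j i)
    -- key sup-membership
    have hkey : ∀ j (x : M), b j • x ∈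
        Submodule.span A (Set.range (ml j)) ⊔ I • (⊤ : Submodule A M) := by
      intro j x
      have h1 : abar j • (qM x : M') ∈ Submodule.span A' (Set.range (mb j)) := hmb j (qM x)
      obtain ⟨cb, hcb⟩ := (Submodule.mem_span_range_iff_exists_fun A').mp h1
      choose cc hcc using fun i => Ideal.Quotient.mk_surjective (cb i)
      have h2 : qM (b j • x - ∑ i, cc i • ml j i) = 0 := by
        rw [map_sub, map_sum]
        have e1 : qM (b j • x) = abar j • (qM x : M') := by rw [← hb j]; exact (hsmul _ _).symm
        have e2 : ∀ i, qM (cc i • ml j i) = cb i • mb j i := by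
          intro i
          rw [← hcc i, ← hml j i]
          exact (hsmul _ _).symm
        rw [e1, Finset.sum_congr rfl fun i _ => e2 i, hcb, sub_self]
      have h3 : b j • x - ∑ i, cc i • ml j i ∈ (I • ⊤ : Submodule A M) :=
        (Submodule.Quotient.mk_eq_zero _).mp h2
      have h4 : b j • x = (∑ i, cc i • ml j i) + (b j • x - ∑ i, cc i • ml j i) := by abel
      rw [h4]
      exact Submodule.add_mem _
        (Submodule.mem_sup_left (Submodule.sum_mem _ fun i _ =>
          Submodule.smul_mem _ _ (Submodule.subset_span ⟨i, rfl⟩)))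
        (Submodule.mem_sup_right h3)
    choose v k hv1 hv2 using fun j => nak (Submodule.span A (Set.range (ml j))) I (b j) (hkey j)
    refine ⟨Fin.cons a₀ v, ?_, ?_⟩
    · -- span = ⊤
      by_contra hne
      obtain ⟨mx, hmx, hle⟩ := Ideal.exists_le_maximal _ hne
      have hmxp : mx.IsPrime := hmx.isPrime
      have ha₀mx : a₀ ∈ mx := hle (Ideal.subset_span ⟨0, rfl⟩)
      have hImx : I ≤ mx := by
        rw [hI, Ideal.span_le]
        intro y hy
        rw [Set.mem_singleton_iff.mp hy]
        exact ha₀mx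
      have hvmx : ∀ j, v j ∈ mx := fun j =>
        hle (Ideal.subset_span ⟨j.succ, by simp [Fin.cons_succ]⟩)
      have hbmx : ∀ j, b j ∈ mx := by
        intro j
        have hpow : b j ^ k j ∈ mx := by
          have heq : b j ^ k j = v j - (v j - b j ^ k j) := by ring
          rw [heq]
          exact Submodule.sub_mem _ (hvmx j) (hImx (hv1 j))
        exact hmxp.mem_of_pow_mem _ hpow
      -- 1 ∈ span abar pulled back
      have hone : (1 : A') ∈ Submodule.span A' (Set.range abar) := by
        rw [show Submodule.span A' (Set.range abar) = Ideal.span (Set.range abar) from rfl, habarspan]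
        trivial
      obtain ⟨rb, hrb⟩ := (Submodule.mem_span_range_iff_exists_fun A').mp hone
      choose r hr using fun j => Ideal.Quotient.mk_surjective (rb j)
      have h5 : π (1 - ∑ j, r j * b j) = 0 := by
        rw [map_sub, map_one, map_sum]
        have : ∀ j, π (r j * b j) = rb j • abar j := by
          intro j
          rw [map_mul, hr, hb]
          rfl
        rw [Finset.sum_congr rfl fun j _ => this j, hrb, sub_self]
      have h6 : 1 - ∑ j, r j * b j ∈ I := by
        rwa [hπ, Ideal.Quotient.eq_zero_iff_mem] at h5
      have : (1 : A) ∈ mx := by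
        have : (1 : A) = (1 - ∑ j, r j * b j) + ∑ j, r j * b j := by ring
        rw [this]
        exact Submodule.add_mem _ (hImx h6)
          (Submodule.sum_mem _ fun j _ => mx.mul_mem_left _ (hbmx j))
      exact hmxp.ne_top (Ideal.eq_top_of_isUnit_mem _ this isUnit_one)
    · -- Pgen for each entry
      intro i
      refine Fin.cases ?_ ?_ i
      · simpa [Fin.cons_zero] using hP₀
      · intro j
        simpa [Fin.cons_succ] using ⟨ml j, hv2 j⟩


theorem pgen_free {A : Type*} [CommRing A] [IsNoetherianRing A] {M : Type*}
    [AddCommGroup M] [Module A M] (n : ℕ) (a : A) (hP : Pgen A M n a)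
    (hloc : ∀ 𝔭 : Ideal A, ∀ _ : 𝔭.IsPrime,
      Nonempty ((LocalizedModule 𝔭.primeCompl M) ≃ₗ[Localization.AtPrime 𝔭]
        (Fin n → Localization.AtPrime 𝔭))) :
    Nonempty ((LocalizedModule (Submonoid.powers a) M) ≃ₗ[Localization.Away a]
      (Fin n → Localization.Away a)) := by
  classical
  obtain ⟨m, hm⟩ := hP
  set S := Submonoid.powers a with hS
  set R := Localization.Away a with hR
  set Ma := LocalizedModule S M with hMa
  set φ : (Fin n → R) →ₗ[R] Ma :=
    ∑ i, (LinearMap.proj i).smulRight (LocalizedModule.mk (m i) 1) with hφ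
  have hφapp : ∀ w : Fin n → R, φ w = ∑ i, w i • LocalizedModule.mk (m i) 1 := by
    intro w
    rw [hφ]
    simp [LinearMap.sum_apply, LinearMap.smulRight_apply, LinearMap.proj_apply]
  have haS : a ∈ S := Submonoid.mem_powers a
  -- surjectivity
  have hsurj : Function.Surjective φ := by
    intro z
    induction z using LocalizedModule.induction_on with
    | h x s =>
      obtain ⟨c, hc⟩ := (Submodule.mem_span_range_iff_exists_fun A).mp (hm x)
      refine ⟨fun i => Localization.mk (c i) (s * ⟨a, haS⟩), ?_⟩
      rw [hφapp]
      have h1 : ∀ i : Fin n, Localization.mk (c i) (s * ⟨a, haS⟩) • LocalizedModule.mk (m i) 1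
          = Localization.mk 1 (s * ⟨a, haS⟩) •
            (c i • (LocalizedModule.mkLinearMap S M (m i))) := by
        intro i
        rw [LocalizedModule.mk_smul_mk]
        have : c i • (LocalizedModule.mkLinearMap S M (m i))
            = LocalizedModule.mk (c i • m i) 1 := by
          rw [← map_smul]; rfl
        rw [this, LocalizedModule.mk_smul_mk, one_smul, mul_one]
      rw [Finset.sum_congr rfl fun i _ => h1 i, ← Finset.smul_sum]
      have h2 : ∑ i, c i • (LocalizedModule.mkLinearMap S M (m i))
          = LocalizedModule.mk (a • x) 1 := by
        have he : ∀ i : Fin n, c i • (LocalizedModule.mkLinearMap S M (m i))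
            = LocalizedModule.mkLinearMap S M (c i • m i) := fun i => (map_smul _ _ _).symm
        rw [Finset.sum_congr rfl fun i _ => he i, ← map_sum, hc]; rfl
      rw [h2, LocalizedModule.mk_smul_mk, one_smul, mul_one]
      rw [LocalizedModule.mk_eq]
      exact ⟨1, by
        simp only [one_smul, Submonoid.mk_smul, Submonoid.coe_mul, Submonoid.smul_def]
        rw [mul_smul, smul_comm]⟩
  -- injectivity
  have hinj : Function.Injective φ := by
    rw [injective_iff_map_eq_zero]
    intro v hv
    by_contra hv0
    -- a prime p avoiding a that "sees" v
    set IR : Ideal R := LinearMap.ker (LinearMap.toSpanSingleton R (Fin n → R) v) with hIR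
    have hIRne : IR ≠ ⊤ := by
      intro htop
      have h1 : (1 : R) ∈ IR := htop ▸ trivial
      rw [hIR, LinearMap.mem_ker, LinearMap.toSpanSingleton_apply, one_smul] at h1
      exact hv0 h1
    obtain ⟨q, hqmax, hq⟩ := Ideal.exists_le_maximal _ hIRne
    haveI hqp : q.IsPrime := hqmax.isPrime
    set p : Ideal A := Ideal.comap (algebraMap A R) q with hp
    haveI hpp : p.IsPrime := Ideal.IsPrime.comap _
    have hap : a ∉ p := by
      intro hmem
      have hu : IsUnit (algebraMap A R a) := IsLocalization.map_units R ⟨a, haS⟩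
      exact hqmax.ne_top (Ideal.eq_top_of_isUnit_mem _ (Ideal.mem_comap.mp hmem) hu)
    have hSp : ∀ s : S, (s : A) ∈ p.primeCompl := by
      intro s
      obtain ⟨k, hk⟩ := s.2
      intro hcon
      have hk' : a ^ k = (s : A) := hk
      exact hap (hpp.mem_of_pow_mem k (by rw [hk']; exact hcon))
    set Ap := Localization.AtPrime p with hAp
    set Mp := LocalizedModule p.primeCompl M with hMp
    have hunits : ∀ s : S, IsUnit (algebraMap A Ap (s : A)) := fun s =>
      IsLocalization.map_units Ap (⟨(s : A), hSp s⟩ : p.primeCompl)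
    set ρ : R →+* Ap := IsLocalization.lift (S := R) (g := algebraMap A Ap) hunits with hρ
    have hρalg : ∀ r : A, ρ (algebraMap A R r) = algebraMap A Ap r := fun r =>
      IsLocalization.lift_eq hunits r
    set h₁ : (Fin n → R) →ₗ[A] (Fin n → Ap) :=
      { toFun := fun w i => ρ (w i)
        map_add' := by intro w₁ w₂; funext i; simp
        map_smul' := by
          intro r w; funext i
          simp only [Pi.smul_apply, RingHom.id_apply]
          rw [Algebra.smul_def, map_mul, hρalg, ← Algebra.smul_def] } with hh₁
    have hh₁app : ∀ (w : Fin n → R) (i : Fin n), h₁ w i = ρ (w i) := fun w i => rfl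
    have hh₁ker : ∀ w : Fin n → R, h₁ w = 0 → ∃ t : p.primeCompl, (t : A) • w = 0 := by
      intro w hw
      have hcomp : ∀ i, ∃ t : p.primeCompl, (t : A) • w i = 0 := by
        intro i
        have h0 : ρ (w i) = 0 := by rw [← hh₁app w i, hw]; rfl
        obtain ⟨⟨x', s'⟩, hsec⟩ : ∃ z : A × S, IsLocalization.mk' R z.1 z.2 = w i :=
          ⟨IsLocalization.sec S (w i), IsLocalization.mk'_sec R (w i)⟩
        have halg0 : algebraMap A Ap x' = 0 := by
          have h2 : ρ (w i * algebraMap A R (s' : A)) = 0 := by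
            rw [map_mul, h0, zero_mul]
          rw [← hsec, IsLocalization.mk'_spec, hρalg] at h2
          exact h2
        obtain ⟨t, ht⟩ := (IsLocalization.map_eq_zero_iff p.primeCompl Ap x').mp halg0
        refine ⟨t, ?_⟩
        rw [← hsec, Algebra.smul_def, IsLocalization.mul_mk'_eq_mk'_of_mul, ht,
          IsLocalization.mk'_zero]
      choose t ht using hcomp
      refine ⟨∏ i, t i, ?_⟩
      funext i
      have : ((∏ j, t j : p.primeCompl) : A) = (∏ j ∈ Finset.univ.erase i, (t j : A)) * (t i : A) := by
        rw [← Finset.prod_erase_mul _ _ (Finset.mem_univ i)]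
        push_cast
        rfl
      show ((∏ j, t j : p.primeCompl) : A) • w i = 0
      rw [this, mul_smul, ht i, smul_zero]
    -- the second leg of the diagram
    set mkLp := LocalizedModule.mkLinearMap p.primeCompl M with hmkLp
    have hMaU : ∀ (s : S), IsUnit (algebraMap A (Module.End A Mp) (s : A)) := fun s =>
      IsLocalizedModule.map_units mkLp ⟨(s : A), hSp s⟩
    set h₂ : Ma →ₗ[A] Mp := LocalizedModule.lift S mkLp hMaU with hh₂
    have hh₂mk : ∀ x : M, h₂ (LocalizedModule.mk x 1) = LocalizedModule.mk x 1 := by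
      intro x
      have hcp := LocalizedModule.lift_comp S mkLp hMaU
      calc h₂ (LocalizedModule.mk x 1) = (h₂.comp (LocalizedModule.mkLinearMap S M)) x := rfl
        _ = mkLp x := by rw [hcp]
        _ = LocalizedModule.mk x 1 := rfl
    set φ' : (Fin n → Ap) →ₗ[Ap] Mp :=
      ∑ i, (LinearMap.proj i).smulRight (LocalizedModule.mk (m i) 1) with hφ'
    have hφ'app : ∀ w : Fin n → Ap, φ' w = ∑ i, w i • LocalizedModule.mk (m i) 1 := by
      intro w
      rw [hφ']
      simp [LinearMap.sum_apply, LinearMap.smulRight_apply, LinearMap.proj_apply]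
    -- commutativity on "integral" tuples
    have hsumMp : ∀ c : Fin n → A,
        ∑ i, c i • LocalizedModule.mk (m i) (1 : p.primeCompl)
          = LocalizedModule.mk (∑ i, c i • m i) 1 := by
      intro c
      have he : ∀ i : Fin n, c i • LocalizedModule.mk (m i) (1 : p.primeCompl)
          = mkLp (c i • m i) := fun i => by
        rw [hmkLp]
        rw [show mkLp (c i • m i) = LocalizedModule.mk (c i • m i) (1 : p.primeCompl) from rfl]
        rw [LocalizedModule.smul'_mk]
      rw [Finset.sum_congr rfl fun i _ => he i, ← map_sum]
      rfl
    have hsumMa : ∀ c : Fin n → A,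
        ∑ i, c i • LocalizedModule.mk (m i) (1 : S)
          = LocalizedModule.mk (∑ i, c i • m i) 1 := by
      intro c
      have he : ∀ i : Fin n, c i • LocalizedModule.mk (m i) (1 : S)
          = LocalizedModule.mkLinearMap S M (c i • m i) := fun i => by
        rw [show LocalizedModule.mkLinearMap S M (c i • m i)
          = LocalizedModule.mk (c i • m i) (1 : S) from rfl]
        rw [LocalizedModule.smul'_mk]
      rw [Finset.sum_congr rfl fun i _ => he i, ← map_sum]
      rfl
    have hcommA : ∀ x : Fin n → A,
        h₂ (φ (fun i => algebraMap A R (x i))) = φ' (h₁ (fun i => algebraMap A R (x i))) := by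
      intro x
      have l1 : φ (fun i => algebraMap A R (x i)) = LocalizedModule.mk (∑ i, x i • m i) 1 := by
        rw [hφapp]
        rw [Finset.sum_congr rfl fun i (_ : i ∈ Finset.univ) =>
          (algebraMap_smul R (x i) (LocalizedModule.mk (m i) (1 : S)))]
        exact hsumMa x
      have l2 : h₁ (fun i => algebraMap A R (x i)) = fun i => algebraMap A Ap (x i) := by
        funext i
        rw [hh₁app, hρalg]
      rw [l1, hh₂mk, l2, hφ'app]
      rw [Finset.sum_congr rfl fun i (_ : i ∈ Finset.univ) =>
        (algebraMap_smul Ap (x i) (LocalizedModule.mk (m i) (1 : p.primeCompl)))]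
      exact (hsumMp x).symm
    -- common denominators
    have hrep : ∀ y : R, ∃ kx : ℕ × A, (a ^ kx.1 : A) • y = algebraMap A R kx.2 := by
      intro y
      obtain ⟨⟨x', s'⟩, hsec⟩ : ∃ z : A × S, IsLocalization.mk' R z.1 z.2 = y :=
        ⟨IsLocalization.sec S y, IsLocalization.mk'_sec R y⟩
      obtain ⟨k, hk⟩ := s'.2
      refine ⟨⟨k, x'⟩, ?_⟩
      have hk' : a ^ k = (s' : A) := hk
      rw [← hsec, Algebra.smul_def, show algebraMap A R (a ^ k) = algebraMap A R (s' : A) from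
        by rw [hk']]
      exact IsLocalization.mk'_spec' R x' s'
    have hcd : ∀ w : Fin n → R, ∃ (K : ℕ) (x : Fin n → A),
        (a ^ K : A) • w = fun i => algebraMap A R (x i) := by
      intro w
      choose kx hkx using fun i => hrep (w i)
      refine ⟨∑ j, (kx j).1, fun i => a ^ (∑ j, (kx j).1 - (kx i).1) * (kx i).2, ?_⟩
      funext i
      have hle : (kx i).1 ≤ ∑ j, (kx j).1 :=
        Finset.single_le_sum (f := fun j => (kx j).1) (fun _ _ => Nat.zero_le _)
          (Finset.mem_univ i)
      have e1 : (a : A) ^ (∑ j, (kx j).1)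
          = a ^ (∑ j, (kx j).1 - (kx i).1) * a ^ (kx i).1 := by
        rw [← pow_add, Nat.sub_add_cancel hle]
      show (a ^ (∑ j, (kx j).1) : A) • w i
          = algebraMap A R (a ^ (∑ j, (kx j).1 - (kx i).1) * (kx i).2)
      rw [e1, mul_smul, hkx i, Algebra.smul_def, ← map_mul]
    -- the diagram commutes
    have hcomm : ∀ w : Fin n → R, h₂ (φ w) = φ' (h₁ w) := by
      intro w
      obtain ⟨K, x, hweq⟩ := hcd w
      have h1 : (a ^ K : A) • h₂ (φ w) = (a ^ K : A) • φ' (h₁ w) := by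
        calc (a ^ K : A) • h₂ (φ w) = h₂ ((a ^ K : A) • φ w) := (map_smul h₂ _ _).symm
          _ = h₂ (φ ((a ^ K : A) • w)) := by
              congr 1
              exact (LinearMap.map_smul_of_tower φ _ _).symm
          _ = h₂ (φ (fun i => algebraMap A R (x i))) := by rw [hweq]
          _ = φ' (h₁ (fun i => algebraMap A R (x i))) := hcommA x
          _ = φ' (h₁ ((a ^ K : A) • w)) := by rw [hweq]
          _ = φ' ((a ^ K : A) • h₁ w) := by rw [map_smul]
          _ = (a ^ K : A) • φ' (h₁ w) := LinearMap.map_smul_of_tower _ _ _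
      have hu : IsUnit (algebraMap A (Module.End A Mp) (a ^ K)) :=
        hMaU ⟨a ^ K, pow_mem haS K⟩
      have hinj2 : Function.Injective (algebraMap A (Module.End A Mp) (a ^ K)) :=
        ((Module.End.isUnit_iff _).mp hu).injective
      apply hinj2
      simpa only [Module.algebraMap_end_apply] using h1
    -- φ' is surjective
    have hφ'surj : Function.Surjective φ' := by
      intro z
      induction z using LocalizedModule.induction_on with
      | h x s =>
        obtain ⟨c, hc⟩ := (Submodule.mem_span_range_iff_exists_fun A).mp (hm x)
        refine ⟨Localization.mk 1 (s * ⟨a, hap⟩) • (fun i => algebraMap A Ap (c i)), ?_⟩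
        rw [map_smul, hφ'app]
        rw [Finset.sum_congr rfl fun i (_ : i ∈ Finset.univ) =>
          (algebraMap_smul Ap (c i) (LocalizedModule.mk (m i) (1 : p.primeCompl)))]
        rw [hsumMp c, hc, LocalizedModule.mk_smul_mk, one_smul, mul_one, LocalizedModule.mk_eq]
        exact ⟨1, by
          simp only [one_smul, Submonoid.mk_smul, Submonoid.coe_mul, Submonoid.smul_def]
          rw [mul_smul, smul_comm]⟩
    -- φ' is injective
    obtain ⟨e⟩ := hloc p hpp
    haveI : IsNoetherianRing Ap := IsLocalization.isNoetherianRing p.primeCompl Ap inferInstance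
    haveI : IsNoetherian Ap (Fin n → Ap) := inferInstance
    have hψsurj : Function.Surjective (e.toLinearMap ∘ₗ φ') := e.surjective.comp hφ'surj
    have hψinj := IsNoetherian.injective_of_surjective_endomorphism _ hψsurj
    have hφ'inj : Function.Injective φ' := by
      intro x y hxy
      apply hψinj
      simp only [LinearMap.coe_comp, Function.comp_apply, hxy]
    -- conclude
    have hφv' : φ' (h₁ v) = 0 := by rw [← hcomm, hv, map_zero]
    have h₁v : h₁ v = 0 := hφ'inj (by rw [hφv', map_zero])
    obtain ⟨t, ht⟩ := hh₁ker v h₁v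
    have hmem : algebraMap A R (t : A) ∈ IR := by
      rw [hIR, LinearMap.mem_ker, LinearMap.toSpanSingleton_apply, algebraMap_smul]
      exact ht
    exact t.2 (Ideal.mem_comap.mpr (hq hmem))
  exact ⟨(LinearEquiv.ofBijective φ ⟨hinj, hsurj⟩).symm⟩


/-- Over a noetherian ring of Krull dimension at most `d`, a finitely generated projective
module that is locally free of rank `n` at every prime is trivialized by a cover of
`Spec A` by `d + 1` principal open sets. -/
theorem splitting_number_le_dim_succ
    (A : Type*) [CommRing A] [IsNoetherianRing A] (d : ℕ)
    (hdim : ringKrullDim A ≤ (d : WithBot (WithTop ℕ)))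
    (n : ℕ) (M : Type*) [AddCommGroup M] [Module A M]
    [Module.Finite A M] [Module.Projective A M]
    (hloc : ∀ 𝔭 : Ideal A, ∀ _ : 𝔭.IsPrime,
      Nonempty ((LocalizedModule 𝔭.primeCompl M) ≃ₗ[Localization.AtPrime 𝔭]
        (Fin n → Localization.AtPrime 𝔭))) :
    ∃ a : Fin (d + 1) → A, Ideal.span (Set.range a) = ⊤ ∧
      ∀ i : Fin (d + 1),
        Nonempty ((LocalizedModule (Submonoid.powers (a i)) M) ≃ₗ[Localization.Away (a i)]
          (Fin n → Localization.Away (a i))) := by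
  have H : ∀ p : Ideal A, p.IsPrime → ∃ f ∉ p, Pgen A M n f := by
    intro p hp
    obtain ⟨e⟩ := hloc p hp
    exact pgen_local n p (hp := hp) e
  obtain ⟨a, hspan, hPa⟩ := pgen_cover d A M n hdim H
  exact ⟨a, hspan, fun i => pgen_free n (a i) (hPa i) hloc⟩
end

section
/- Let A be a noetherian commutative ring whose Krull dimension is at most a natural number d, and let M be a finitely generated projective A-module such that for every prime ideal 𝔭 of A the localization M_𝔭 is a free module of rank n over A_𝔭. Then M can be generated by n·(d+1) elements, i.e. there is a subset of M of cardinality at most n·(d+1) whose A-linear span is all of M. -/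
open Submodule

section Aux

variable {A : Type*} [CommRing A] {M : Type*} [AddCommGroup M] [Module A M]

lemma aux_unit_smul {B : Type*} [CommRing B] {P : Type*} [AddCommGroup P] [Module B P]
    (T : Submodule B P) {u : B} (hu : IsUnit u) {x : P} (h : u • x ∈ T) : x ∈ T := by
  have h2 := T.smul_mem ((hu.unit⁻¹ : Bˣ) : B) h
  rwa [smul_smul, IsUnit.val_inv_mul, one_smul] at h2

/-- If for every `m` there is `r ∉ 𝔭` with `r • m ∈ N`, then `N.colon ⊤` is not
contained in `𝔭`. -/
lemma aux_colon_not_le [Module.Finite A M] (𝔭 : Ideal A) [h𝔭 : 𝔭.IsPrime]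
    (N : Submodule A M) (h : ∀ m : M, ∃ r ∉ 𝔭, r • m ∈ N) :
    ¬ N.colon ⊤ ≤ 𝔭 := by
  obtain ⟨s, hs⟩ := Module.Finite.fg_top (R := A) (M := M)
  choose r hr hrN using h
  intro hle
  set ρ : A := ∏ m ∈ s, r m with hρ
  have hρmem : ρ ∈ N.colon ⊤ := by
    rw [Submodule.mem_colon]
    intro p _
    have hsub : (s : Set M) ⊆ ↑(N.comap (LinearMap.lsmul A M ρ)) := by
      intro m hm
      obtain ⟨k, hk⟩ := Finset.dvd_prod_of_mem r hm
      simp only [SetLike.mem_coe, Submodule.mem_comap, LinearMap.lsmul_apply]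
      rw [hρ, hk, mul_comm, mul_smul]
      exact N.smul_mem k (hrN m)
    have hp : p ∈ Submodule.span A (s : Set M) := by rw [hs]; trivial
    exact (Submodule.span_le.mpr hsub) hp
  have hρnot : ρ ∉ 𝔭 := by
    have : ρ ∈ 𝔭.primeCompl := Submonoid.prod_mem _ (fun m _ => hr m)
    exact this
  exact hρnot (hle hρmem)

/-- Nakayama-type step: if `c ∉ 𝔭` and `c • m ∈ N ⊔ 𝔭 • ⊤` for all `m`, then
`N.colon ⊤` is not contained in `𝔭`. -/
lemma aux_nakayama [Module.Finite A M] (𝔭 : Ideal A) [𝔭.IsPrime]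
    (N : Submodule A M) (c : A) (hc : c ∉ 𝔭)
    (h : ∀ m : M, c • m ∈ N ⊔ 𝔭 • (⊤ : Submodule A M)) :
    ¬ N.colon ⊤ ≤ 𝔭 := by
  apply aux_colon_not_le 𝔭 N
  set S := 𝔭.primeCompl with hS
  set B := Localization.AtPrime 𝔭 with hB
  set Q := M ⧸ N with hQdef
  set f : Q →ₗ[A] LocalizedModule S Q := LocalizedModule.mkLinearMap S Q with hf
  have hQfin : Module.Finite B (LocalizedModule S Q) :=
    Module.Finite.of_isLocalizedModule S f
  have hq : ∀ m : M, c • N.mkQ m ∈ 𝔭 • (⊤ : Submodule A Q) := by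
    intro m
    have h1 : c • N.mkQ m = N.mkQ (c • m) := (map_smul _ _ _).symm
    rw [h1]
    have h2 : N.mkQ (c • m) ∈ (N ⊔ 𝔭 • (⊤ : Submodule A M)).map N.mkQ :=
      Submodule.mem_map_of_mem (h m)
    rw [Submodule.map_sup, Submodule.map_smul''] at h2
    have h3 : N.map N.mkQ = ⊥ := by
      rw [eq_bot_iff]
      rintro x ⟨y, hy, rfl⟩
      simpa using (Submodule.Quotient.mk_eq_zero N).mpr hy
    rw [h3, bot_sup_eq] at h2
    exact Submodule.smul_mono le_rfl le_top h2
  set T : Submodule B (LocalizedModule S Q) := (IsLocalRing.maximalIdeal B) • ⊤ with hT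
  have hC1 : ∀ q ∈ 𝔭 • (⊤ : Submodule A Q), f q ∈ T := by
    intro q hq'
    refine Submodule.smul_induction_on hq' (fun r hr q' _ => ?_)
      (fun x y hx hy => by rw [map_add]; exact T.add_mem hx hy)
    rw [map_smul, ← algebraMap_smul B r (f q')]
    exact Submodule.smul_mem_smul
      ((IsLocalization.AtPrime.to_map_mem_maximal_iff B 𝔭 r).mpr hr) trivial
  have htop : ∀ x : LocalizedModule S Q, x ∈ T := by
    intro x
    obtain ⟨⟨q, s⟩, rfl⟩ := IsLocalizedModule.mk'_surjective S f x
    obtain ⟨m, rfl⟩ := N.mkQ_surjective q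
    have hcs : c * (s : A) ∈ S := S.mul_mem hc s.2
    have hu : IsUnit (algebraMap A B (c * (s : A))) := IsLocalization.map_units B ⟨_, hcs⟩
    apply aux_unit_smul T hu
    have key : (algebraMap A B (c * (s : A))) • IsLocalizedModule.mk' f (N.mkQ m) s
        = f (c • N.mkQ m) := by
      rw [algebraMap_smul, ← IsLocalizedModule.mk'_smul, mul_comm, mul_smul,
        ← Submonoid.smul_def, IsLocalizedModule.mk'_cancel]
    rw [Function.uncurry_apply_pair, key]
    exact hC1 _ (hq m)
  have hbot : (⊤ : Submodule B (LocalizedModule S Q)) = ⊥ :=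
    Submodule.eq_bot_of_le_smul_of_le_jacobson_bot (IsLocalRing.maximalIdeal B) ⊤
      (Module.finite_def.mp hQfin) (fun x _ => htop x)
      (IsLocalRing.maximalIdeal_le_jacobson ⊥)
  have hsub : Subsingleton (LocalizedModule S Q) := by
    constructor
    intro a b
    have ha : a ∈ (⊥ : Submodule B (LocalizedModule S Q)) := hbot ▸ Submodule.mem_top
    have hb : b ∈ (⊥ : Submodule B (LocalizedModule S Q)) := hbot ▸ Submodule.mem_top
    rw [Submodule.mem_bot] at ha hb
    rw [ha, hb]
  have helt := LocalizedModule.subsingleton_iff.mp hsub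
  intro m
  obtain ⟨r, hrS, hr0⟩ := helt (N.mkQ m)
  refine ⟨r, hrS, ?_⟩
  rwa [Submodule.mkQ_apply, ← Submodule.Quotient.mk_smul, Submodule.Quotient.mk_eq_zero] at hr0

/-- Local generation: if `M` localized at `𝔭` is free of rank `n`, there are `n`
elements of `M` whose span has colon ideal not contained in `𝔭`. -/
lemma aux_local_gen [Module.Finite A M] (n : ℕ) (𝔭 : Ideal A) [𝔭.IsPrime]
    (hiso : Nonempty ((LocalizedModule 𝔭.primeCompl M) ≃ₗ[Localization.AtPrime 𝔭]
      (Fin n → Localization.AtPrime 𝔭))) :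
    ∃ v : Fin n → M, ¬ (Submodule.span A (Set.range v)).colon ⊤ ≤ 𝔭 := by
  obtain ⟨e⟩ := hiso
  set S := 𝔭.primeCompl with hS
  set B := Localization.AtPrime 𝔭 with hB
  set f : M →ₗ[A] LocalizedModule S M := LocalizedModule.mkLinearMap S M with hf
  choose vs hvs using fun k : Fin n =>
    IsLocalizedModule.mk'_surjective S f (e.symm ((Pi.basisFun B (Fin n)) k))
  set v : Fin n → M := fun k => (vs k).1 with hv
  refine ⟨v, ?_⟩
  apply aux_colon_not_le 𝔭
  have hspan : Submodule.span B (f '' Set.range v) = ⊤ := by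
    rw [eq_top_iff, ← ((Pi.basisFun B (Fin n)).map e.symm).span_eq, Submodule.span_le]
    rintro x ⟨k, rfl⟩
    rw [Module.Basis.map_apply, ← hvs k, Function.uncurry_apply_pair]
    have h1 : f (v k) ∈ Submodule.span B (f '' Set.range v) :=
      Submodule.subset_span ⟨v k, ⟨k, rfl⟩, rfl⟩
    have hu : IsUnit (algebraMap A B ((vs k).2 : A)) := IsLocalization.map_units B (vs k).2
    apply aux_unit_smul _ hu
    have key : (algebraMap A B ((vs k).2 : A)) • IsLocalizedModule.mk' f (v k) (vs k).2
        = f (v k) := by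
      rw [algebraMap_smul, ← Submonoid.smul_def, IsLocalizedModule.mk'_cancel']
    rw [key]
    exact h1
  intro m
  have hm : f m ∈ (Submodule.span A (Set.range v)).localized' B S f := by
    rw [Submodule.localized'_span, hspan]
    trivial
  rw [Submodule.mem_localized'] at hm
  obtain ⟨m', hm', s, hs⟩ := hm
  rw [← IsLocalizedModule.mk'_one S f m] at hs
  rw [IsLocalizedModule.mk'_eq_mk'_iff] at hs
  obtain ⟨u, hu⟩ := hs
  rw [one_smul] at hu
  refine ⟨(u : A) * (s : A), S.mul_mem u.2 s.2, ?_⟩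
  have h2 : ((u : A) * (s : A)) • m = (u : A) • (s : A) • m := mul_smul _ _ _
  rw [h2, ← Submonoid.smul_def, ← Submonoid.smul_def, hu, Submonoid.smul_def]
  exact Submodule.smul_mem _ _ hm'

end Aux

section Main

variable {A : Type*} [CommRing A] {M : Type*} [AddCommGroup M] [Module A M]

/-- One step of the stratification: given an ideal `I`, produce a tuple `w0` and a larger
ideal `I'` such that `w0` works for primes over `I` not over `I'`, and every prime over
`I'` strictly contains a minimal prime over `I`. -/
lemma aux_step [IsNoetherianRing A] [Module.Finite A M] (n : ℕ)
    (hloc : ∀ 𝔭 : Ideal A, 𝔭.IsPrime →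
      ∃ v : Fin n → M, ¬ (Submodule.span A (Set.range v)).colon ⊤ ≤ 𝔭)
    (I : Ideal A) :
    ∃ (w0 : Fin n → M) (I' : Ideal A), I ≤ I' ∧
      (∀ 𝔭 : Ideal A, 𝔭.IsPrime → I ≤ 𝔭 → ¬ I' ≤ 𝔭 →
        ¬ (Submodule.span A (Set.range w0)).colon ⊤ ≤ 𝔭) ∧
      (∀ 𝔭 : Ideal A, 𝔭.IsPrime → I' ≤ 𝔭 → ∃ 𝔮 ∈ I.minimalPrimes, 𝔮 < 𝔭) := by
  classical
  have hfin : I.minimalPrimes.Finite := by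
    rw [Ideal.minimalPrimes_eq_comap]
    exact ((minimalPrimes.finite_of_isNoetherianRing (A ⧸ I)).image _)
  set Qs : Finset (Ideal A) := hfin.toFinset with hQs
  have hQsmem : ∀ 𝔮, 𝔮 ∈ Qs ↔ 𝔮 ∈ I.minimalPrimes := fun 𝔮 => hfin.mem_toFinset
  have h_v : ∀ 𝔮 ∈ Qs, ∃ vf : (Fin n → M) × A,
      vf.2 ∈ (Submodule.span A (Set.range vf.1)).colon ⊤ ∧ vf.2 ∉ 𝔮 := by
    intro 𝔮 h𝔮
    have hq := (hQsmem 𝔮).mp h𝔮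
    obtain ⟨v, hv⟩ := hloc 𝔮 hq.1.1
    obtain ⟨x, hx, hx'⟩ := SetLike.not_le_iff_exists.mp hv
    exact ⟨⟨v, x⟩, hx, hx'⟩
  have h_e : ∀ 𝔮 ∈ Qs, ∃ e : A, e ∉ 𝔮 ∧ ∀ 𝔮' ∈ Qs, 𝔮' ≠ 𝔮 → e ∈ 𝔮' := by
    intro 𝔮 h𝔮
    have hq := (hQsmem 𝔮).mp h𝔮
    have hinf : ¬ ((Qs.erase 𝔮).inf id ≤ 𝔮) := by
      intro hle
      obtain ⟨𝔮', h𝔮', hle'⟩ := (Ideal.IsPrime.inf_le' hq.1.1).mp hle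
      have hq' := (hQsmem 𝔮').mp (Finset.mem_of_mem_erase h𝔮')
      have h2 : 𝔮 ≤ 𝔮' := hq.2 hq'.1 hle'
      exact (Finset.ne_of_mem_erase h𝔮') (le_antisymm hle' h2)
    obtain ⟨e, he, he'⟩ := SetLike.not_le_iff_exists.mp hinf
    refine ⟨e, he', fun 𝔮' h𝔮' hne => ?_⟩
    exact (Finset.inf_le (Finset.mem_erase.mpr ⟨hne, h𝔮'⟩) : (Qs.erase 𝔮).inf id ≤ 𝔮') he
  choose! vf hvf1 hvf2 using h_v
  choose! eSep hE1 hE2 using h_e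
  set g : Ideal A → A := fun 𝔮 => (vf 𝔮).2 * eSep 𝔮 with hgdef
  set w0 : Fin n → M := fun k => ∑ 𝔮 ∈ Qs, g 𝔮 • (vf 𝔮).1 k with hw0
  set I' : Ideal A := I ⊔ Ideal.span (g '' ↑Qs) with hI'
  have hgI' : ∀ 𝔮 ∈ Qs, g 𝔮 ∈ I' := fun 𝔮 h𝔮 =>
    (le_sup_right : Ideal.span (g '' ↑Qs) ≤ I') (Ideal.subset_span ⟨𝔮, h𝔮, rfl⟩)
  have hgnot : ∀ 𝔮 ∈ Qs, g 𝔮 ∉ 𝔮 := by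
    intro 𝔮 h𝔮 hmem
    have hq := (hQsmem 𝔮).mp h𝔮
    rcases hq.1.1.mem_or_mem hmem with h | h
    · exact hvf2 𝔮 h𝔮 h
    · exact hE1 𝔮 h𝔮 h
  refine ⟨w0, I', le_sup_left, ?_, ?_⟩
  · -- Nakayama case
    intro 𝔭 h𝔭 hI𝔭 hI'𝔭
    haveI := h𝔭
    have hex : ∃ 𝔮₀ ∈ Qs, g 𝔮₀ ∉ 𝔭 := by
      by_contra hcon
      push_neg at hcon
      apply hI'𝔭
      rw [hI']
      refine sup_le hI𝔭 (Ideal.span_le.mpr ?_)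
      rintro x ⟨𝔮, h𝔮, rfl⟩
      exact hcon 𝔮 h𝔮
    obtain ⟨𝔮₀, h𝔮₀, hg₀⟩ := hex
    obtain ⟨𝔮s, h𝔮s, h𝔮sle⟩ := Ideal.exists_minimalPrimes_le (J := 𝔭) hI𝔭
    have hQsmem' := (hQsmem 𝔮s).mpr h𝔮s
    have hgin : ∀ 𝔮 ∈ Qs, 𝔮 ≠ 𝔮₀ → g 𝔮 ∈ 𝔭 := by
      intro 𝔮 h𝔮 hne
      have hee : eSep 𝔮 * eSep 𝔮₀ ∈ 𝔮s := by
        by_cases hcase : 𝔮s = 𝔮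
        · rw [hcase]
          exact Ideal.mul_mem_left _ _ (hE2 𝔮₀ h𝔮₀ 𝔮 h𝔮 hne)
        · exact Ideal.mul_mem_right _ _ (hE2 𝔮 h𝔮 𝔮s hQsmem' hcase)
      have hgg : g 𝔮 * g 𝔮₀ ∈ 𝔭 := by
        have h2 : g 𝔮 * g 𝔮₀ = ((vf 𝔮).2 * (vf 𝔮₀).2) * (eSep 𝔮 * eSep 𝔮₀) := by
          rw [hgdef]; ring
        rw [h2]
        exact Ideal.mul_mem_left _ _ (h𝔮sle hee)
      rcases h𝔭.mem_or_mem hgg with h | h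
      · exact h
      · exact absurd h hg₀
    have hfA₀ : (vf 𝔮₀).2 ∉ 𝔭 := by
      intro h
      exact hg₀ (Ideal.mul_mem_right _ _ h)
    have hcnot : g 𝔮₀ * (vf 𝔮₀).2 ∉ 𝔭 := fun h => by
      rcases h𝔭.mem_or_mem h with h | h
      exacts [hg₀ h, hfA₀ h]
    apply aux_nakayama 𝔭 _ _ hcnot
    intro m
    have h1 : (vf 𝔮₀).2 • m ∈ Submodule.span A (Set.range (vf 𝔮₀).1) :=
      Submodule.mem_colon.mp (hvf1 𝔮₀ h𝔮₀) m trivial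
    have h2 : Submodule.span A (Set.range (vf 𝔮₀).1) ≤
        ((Submodule.span A (Set.range w0)) ⊔ 𝔭 • (⊤ : Submodule A M)).comap
          (LinearMap.lsmul A M (g 𝔮₀)) := by
      rw [Submodule.span_le]
      rintro x ⟨k, rfl⟩
      simp only [SetLike.mem_coe, Submodule.mem_comap, LinearMap.lsmul_apply]
      have hsplit : w0 k = g 𝔮₀ • (vf 𝔮₀).1 k + ∑ 𝔮 ∈ Qs.erase 𝔮₀, g 𝔮 • (vf 𝔮).1 k := by
        simp only [hw0]
        exact (Finset.add_sum_erase _ _ h𝔮₀).symm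
      have heq : g 𝔮₀ • (vf 𝔮₀).1 k
          = w0 k - ∑ 𝔮 ∈ Qs.erase 𝔮₀, g 𝔮 • (vf 𝔮).1 k := by
        rw [hsplit]; abel
      rw [heq]
      apply Submodule.sub_mem
      · exact Submodule.mem_sup_left (Submodule.subset_span ⟨k, rfl⟩)
      · apply Submodule.mem_sup_right
        apply Submodule.sum_mem
        intro 𝔮 h𝔮
        exact Submodule.smul_mem_smul
          (hgin 𝔮 (Finset.mem_of_mem_erase h𝔮) (Finset.ne_of_mem_erase h𝔮)) trivial
    have h3 := h2 h1
    simp only [Submodule.mem_comap, LinearMap.lsmul_apply] at h3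
    rw [mul_smul]
    exact h3
  · intro 𝔭 h𝔭 hle
    haveI := h𝔭
    obtain ⟨𝔮, h𝔮, h𝔮le⟩ :=
      Ideal.exists_minimalPrimes_le (J := 𝔭) (le_trans le_sup_left hle : I ≤ 𝔭)
    refine ⟨𝔮, h𝔮, lt_of_le_of_ne h𝔮le ?_⟩
    intro heq
    have h𝔮Qs := (hQsmem 𝔮).mpr h𝔮
    have h3 : g 𝔮 ∈ 𝔭 := hle (hgI' 𝔮 h𝔮Qs)
    rw [← heq] at h3
    exact hgnot 𝔮 h𝔮Qs h3

/-- The main induction on the dimension of `V(I)`. -/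
lemma aux_induction [IsNoetherianRing A] [Module.Finite A M] (n : ℕ)
    (hloc : ∀ 𝔭 : Ideal A, 𝔭.IsPrime →
      ∃ v : Fin n → M, ¬ (Submodule.span A (Set.range v)).colon ⊤ ≤ 𝔭) :
    ∀ (t : ℕ) (I : Ideal A),
      (∀ c : ℕ → Ideal A, (∀ i, i ≤ t + 1 → (c i).IsPrime) →
        (∀ i, i < t + 1 → c i < c (i + 1)) → ¬ I ≤ c 0) →
      ∃ w : Fin (t + 1) → Fin n → M, ∀ 𝔭 : Ideal A, 𝔭.IsPrime → I ≤ 𝔭 →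
        ∃ i, ¬ (Submodule.span A (Set.range (w i))).colon ⊤ ≤ 𝔭 := by
  intro t
  induction t with
  | zero =>
    intro I hchain
    obtain ⟨w0, I', hII', hnak, hmin⟩ := aux_step n hloc I
    refine ⟨fun _ => w0, fun 𝔭 h𝔭 hI𝔭 => ⟨0, ?_⟩⟩
    by_cases hI'𝔭 : I' ≤ 𝔭
    · obtain ⟨𝔮, h𝔮, hlt⟩ := hmin 𝔭 h𝔭 hI'𝔭
      exfalso
      apply hchain (fun i => if i = 0 then 𝔮 else 𝔭)
      · intro i _
        by_cases h : i = 0 <;> simp [h, h𝔮.1.1, h𝔭]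
      · intro i hi
        interval_cases i
        simpa using hlt
      · simpa using h𝔮.1.2
    · exact hnak 𝔭 h𝔭 hI𝔭 hI'𝔭
  | succ t ih =>
    intro I hchain
    obtain ⟨w0, I', hII', hnak, hmin⟩ := aux_step n hloc I
    have hchain' : ∀ c : ℕ → Ideal A, (∀ i, i ≤ t + 1 → (c i).IsPrime) →
        (∀ i, i < t + 1 → c i < c (i + 1)) → ¬ I' ≤ c 0 := by
      intro c hcp hclt hc0
      obtain ⟨𝔮, h𝔮, hlt⟩ := hmin (c 0) (hcp 0 (by omega)) hc0
      set c' : ℕ → Ideal A := fun i => Nat.rec 𝔮 (fun j _ => c j) i with hc'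
      apply hchain c'
      · intro i hi
        match i with
        | 0 => exact h𝔮.1.1
        | (j+1) => exact hcp j (by omega)
      · intro i hi
        match i with
        | 0 => exact hlt
        | (j+1) => exact hclt j (by omega)
      · exact h𝔮.1.2
    obtain ⟨w', hw'⟩ := ih I' hchain'
    refine ⟨Fin.cons w0 w', fun 𝔭 h𝔭 hI𝔭 => ?_⟩
    by_cases hI'𝔭 : I' ≤ 𝔭
    · obtain ⟨i, hi⟩ := hw' 𝔭 h𝔭 hI'𝔭
      exact ⟨i.succ, by rwa [Fin.cons_succ]⟩
    · exact ⟨0, by rw [Fin.cons_zero]; exact hnak 𝔭 h𝔭 hI𝔭 hI'𝔭⟩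

end Main

/-- A finitely generated projective module that is locally free of rank `n` over a noetherian
ring of Krull dimension at most `d` can be generated by `n * (d + 1)` elements. -/
theorem generators_of_locally_free_module_le_rank_mul_dim_succ
    (A : Type*) [CommRing A] [IsNoetherianRing A] (d : ℕ)
    (hdim : ringKrullDim A ≤ (d : WithBot (WithTop ℕ)))
    (n : ℕ) (M : Type*) [AddCommGroup M] [Module A M]
    [Module.Finite A M] [Module.Projective A M]
    (hloc : ∀ 𝔭 : Ideal A, ∀ _ : 𝔭.IsPrime,
      Nonempty ((LocalizedModule 𝔭.primeCompl M) ≃ₗ[Localization.AtPrime 𝔭]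
        (Fin n → Localization.AtPrime 𝔭))) :
    ∃ S : Finset M, S.card ≤ n * (d + 1) ∧ Submodule.span A (S : Set M) = ⊤ := by
  classical
  have hloc' : ∀ 𝔭 : Ideal A, 𝔭.IsPrime →
      ∃ v : Fin n → M, ¬ (Submodule.span A (Set.range v)).colon ⊤ ≤ 𝔭 := by
    intro 𝔭 h𝔭
    haveI := h𝔭
    exact aux_local_gen n 𝔭 (hloc 𝔭 h𝔭)
  have hchain : ∀ c : ℕ → Ideal A, (∀ i, i ≤ d + 1 → (c i).IsPrime) →
      (∀ i, i < d + 1 → c i < c (i + 1)) → ¬ (⊥ : Ideal A) ≤ c 0 := by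
    intro c hcp hclt _
    -- build an LTSeries in PrimeSpectrum A of length d + 1
    have hmono : StrictMono (fun i : Fin (d + 2) =>
        (⟨c i, hcp i (by omega)⟩ : PrimeSpectrum A)) := by
      have hm : ∀ i : ℕ, i < d + 1 → c i < c (i + 1) := hclt
      intro i j hij
      have : ∀ a b : ℕ, a < b → b ≤ d + 1 → c a < c b := by
        intro a b hab hbd
        induction b with
        | zero => omega
        | succ b ihb =>
          rcases Nat.lt_or_ge a b with h | h
          · exact lt_trans (ihb h (by omega)) (hm b (by omega))
          · have : a = b := by omega
            subst this
            exact hm a (by omega)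
      exact this i j hij (by omega)
    let p : LTSeries (PrimeSpectrum A) :=
      ⟨d + 1, fun i => ⟨c i, hcp i (by omega)⟩, fun i => hmono (Fin.castSucc_lt_succ (i := i))⟩
    have hlen := Order.LTSeries.length_le_krullDim p
    rw [show Order.krullDim (PrimeSpectrum A) = ringKrullDim A from rfl] at hlen
    have h2 : ((d + 1 : ℕ) : WithBot (WithTop ℕ)) ≤ ((d : ℕ) : WithBot (WithTop ℕ)) :=
      le_trans hlen hdim
    have h3 : (d + 1 : ℕ) ≤ d := by exact_mod_cast h2
    omega
  obtain ⟨w, hw⟩ := aux_induction n hloc' d ⊥ hchain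
  set S : Finset M :=
    Finset.image (fun p : Fin (d + 1) × Fin n => w p.1 p.2) Finset.univ with hS
  refine ⟨S, ?_, ?_⟩
  · calc S.card ≤ (Finset.univ : Finset (Fin (d + 1) × Fin n)).card :=
        Finset.card_image_le
    _ = (d + 1) * n := by simp [Finset.card_univ]
    _ = n * (d + 1) := by ring
  · set N : Submodule A M := Submodule.span A (S : Set M) with hN
    have hcolon : N.colon ⊤ = ⊤ := by
      by_contra hne
      obtain ⟨𝔪, h𝔪, hle⟩ := Ideal.exists_le_maximal _ hne
      obtain ⟨i, hi⟩ := hw 𝔪 h𝔪.isPrime bot_le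
      apply hi
      refine le_trans (Submodule.colon_mono ?_ le_rfl) hle
      rw [Submodule.span_le]
      rintro x ⟨k, rfl⟩
      exact Submodule.subset_span (Finset.mem_coe.mpr
        (Finset.mem_image.mpr ⟨⟨i, k⟩, Finset.mem_univ _, rfl⟩))
    rw [eq_top_iff]
    intro m _
    have h1 : (1 : A) ∈ N.colon ⊤ := hcolon ▸ trivial
    simpa using Submodule.mem_colon.mp h1 m trivial
end

section
/- Let K be a field of characteristic p > 0, let V be a finite-dimensional K-vector space, let u be a K-linear endomorphism of V, let r ≥ 0 be a natural number, and let g be a monic polynomial over K such that the minimal polynomial of u equals g(X^{p^r}) (the p^r-fold expansion of g). Then the minimal polynomial of the endomorphism u^{p^r} equals g. -/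
/-- In characteristic `p > 0`, if the minimal polynomial of an endomorphism `u` of a
finite-dimensional vector space is `g(X^(p^r))` with `g` monic, then the minimal polynomial
of `u^(p^r)` is `g`. -/
theorem minpoly_pow_p_pow_of_expand
    (K : Type*) [Field K] (p : ℕ) [CharP K p] (hp : 0 < p)
    (V : Type*) [AddCommGroup V] [Module K V] [FiniteDimensional K V]
    (u : Module.End K V) (r : ℕ) (g : Polynomial K) (hg : g.Monic)
    (hmin : minpoly K u = Polynomial.expand K (p ^ r) g) :
    minpoly K (u ^ (p ^ r)) = g := by
  set q := p ^ r with hq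
  have hq0 : 0 < q := pow_pos hp r
  set m := minpoly K (u ^ q) with hm
  have hint : IsIntegral K (u ^ q) := Algebra.IsIntegral.isIntegral _
  have hmmonic : m.Monic := minpoly.monic hint
  -- m divides g
  have h1 : m ∣ g := minpoly.dvd K _ (by
    rw [← Polynomial.expand_aeval q g u, ← hmin]
    exact minpoly.aeval K u)
  -- minpoly u divides expand q m
  have h2 : minpoly K u ∣ Polynomial.expand K q m := minpoly.dvd K _ (by
    rw [Polynomial.expand_aeval q m u]
    exact minpoly.aeval K _)
  have hdeg : g.natDegree ≤ m.natDegree := by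
    have := Polynomial.natDegree_le_of_dvd h2
      ((Polynomial.expand_ne_zero hq0).mpr (minpoly.ne_zero hint))
    rw [hmin, Polynomial.natDegree_expand, Polynomial.natDegree_expand] at this
    exact Nat.le_of_mul_le_mul_right (by linarith) hq0
  exact (Polynomial.eq_of_monic_of_dvd_of_natDegree_le hmmonic hg h1 hdeg).symm
end

section
/- Let k be a field, let K be a finite field extension of k whose degree equals ℓ^r for a prime number ℓ and a natural number r, and let L be a finite field extension of k such that the tensor product L ⊗_k K is not a field. Then ℓ divides the degree [L : k]. -/
open scoped TensorProduct

set_option maxHeartbeats 1000000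
set_option synthInstance.maxHeartbeats 200000

/-- If `K/k` is a finite field extension of prime-power degree `ℓ^r` and `L/k` is a finite
field extension such that `L ⊗[k] K` is not a field, then `ℓ` divides `[L : k]`. -/
theorem prime_dvd_finrank_of_tensorProduct_not_isField
    (k : Type*) [Field k] (K : Type*) [Field K] [Algebra k K] [FiniteDimensional k K]
    (ℓ r : ℕ) (hℓ : ℓ.Prime) (hK : Module.finrank k K = ℓ ^ r)
    (L : Type*) [Field L] [Algebra k L] [FiniteDimensional k L]
    (hLK : ¬ IsField (L ⊗[k] K)) :
    ℓ ∣ Module.finrank k L := by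
  by_contra hdvd
  -- the tensor product is a nontrivial finite-dimensional k-algebra
  have hfin : Module.finrank k (L ⊗[k] K) = Module.finrank k L * Module.finrank k K :=
    Module.finrank_tensorProduct
  haveI : Nontrivial (L ⊗[k] K) := by
    apply Module.nontrivial_of_finrank_pos (R := k)
    rw [hfin]
    exact Nat.mul_pos Module.finrank_pos Module.finrank_pos
  -- find a nonzero maximal ideal
  obtain ⟨I, hI⟩ := (Ring.not_isField_iff_exists_ideal_bot_lt_and_lt_top).mp hLK
  obtain ⟨m, hm, hIm⟩ := Ideal.exists_le_maximal I (lt_top_iff_ne_top.mp hI.2)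
  have hmne : m ≠ ⊥ := by
    intro h
    exact absurd (le_bot_iff.mp (h ▸ hIm)) (ne_of_gt hI.1)
  haveI := hm
  -- the residue field
  letI : Algebra K (L ⊗[k] K) := Algebra.TensorProduct.rightAlgebra
  letI : Algebra K ((L ⊗[k] K) ⧸ m) := Ideal.Quotient.algebra K
  haveI : IsScalarTower k K ((L ⊗[k] K) ⧸ m) := Ideal.Quotient.isScalarTower k K m
  letI : Algebra L ((L ⊗[k] K) ⧸ m) := Ideal.Quotient.algebra L
  haveI : IsScalarTower k L ((L ⊗[k] K) ⧸ m) := Ideal.Quotient.isScalarTower k L m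
  letI : Field ((L ⊗[k] K) ⧸ m) := Ideal.Quotient.field m
  haveI : FiniteDimensional k ((L ⊗[k] K) ⧸ m) := Module.Finite.quotient k m
  set F := (L ⊗[k] K) ⧸ m with hF
  -- degree divisibilities
  haveI : Module.Free K F := Module.Free.of_divisionRing K F
  haveI : Module.Free L F := Module.Free.of_divisionRing L F
  have hKdvd : Module.finrank k K ∣ Module.finrank k F :=
    ⟨Module.finrank K F, (Module.finrank_mul_finrank k K F).symm⟩
  have hLdvd : Module.finrank k L ∣ Module.finrank k F :=
    ⟨Module.finrank L F, (Module.finrank_mul_finrank k L F).symm⟩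
  -- the quotient has strictly smaller dimension
  have hlt : Module.finrank k F < Module.finrank k (L ⊗[k] K) := by
    have h := Submodule.finrank_quotient_add_finrank (m.restrictScalars k)
    rw [(Submodule.Quotient.restrictScalarsEquiv k m).finrank_eq] at h
    have hmpos : 0 < Module.finrank k (m.restrictScalars k) := by
      haveI : Nontrivial (m.restrictScalars k) :=
        Submodule.nontrivial_iff_ne_bot.mpr
          (fun h' => hmne (by simpa using h'))
      exact Module.finrank_pos
    show Module.finrank k ((L ⊗[k] K) ⧸ m) < Module.finrank k (L ⊗[k] K)
    omega
  -- coprimality gives a contradiction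
  have hcop : Nat.Coprime (ℓ ^ r) (Module.finrank k L) :=
    ((hℓ.coprime_iff_not_dvd).mpr hdvd).pow_left r
  have hmul : ℓ ^ r * Module.finrank k L ∣ Module.finrank k F :=
    Nat.Coprime.mul_dvd_of_dvd_of_dvd hcop (hK ▸ hKdvd) hLdvd
  have hpos : 0 < Module.finrank k F := Module.finrank_pos
  have hle := Nat.le_of_dvd hpos hmul
  rw [hfin, hK] at hlt
  rw [mul_comm] at hle
  exact hlt.not_ge hle
end

section
/- Let k be a field, let K be a finite field extension of k of degree ℓ^r for a prime number ℓ and a natural number r, and let a ∈ K be an element with K = k[a] (the k-subalgebra generated by a is all of K). Let m be a natural number with m ≤ ℓ^r − 1, let L be a finite field extension of k, and suppose x : Fin (m+1) → L is a nonzero tuple such that the norm from L ⊗_k K down to L of the element ∑_{i=0}^{m} x_i ⊗ a^i is zero. Then ℓ divides the degree [L : k]. -/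
open scoped TensorProduct

set_option maxHeartbeats 1600000

/-- If `K = k[a]` has degree `ℓ^r` over `k` for a prime `ℓ`, `m ≤ ℓ^r - 1`, and a finite
extension `L` of `k` carries a nontrivial zero `x` of the norm form
`N(x₀ + x₁ a + ⋯ + x_m a^m)`, then `ℓ` divides `[L : k]`. -/
theorem prime_dvd_finrank_of_norm_form_zero
    (k : Type*) [Field k] (K : Type*) [Field K] [Algebra k K] [FiniteDimensional k K]
    (ℓ r : ℕ) (hℓ : ℓ.Prime) (hK : Module.finrank k K = ℓ ^ r)
    (a : K) (ha : Algebra.adjoin k ({a} : Set K) = ⊤)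
    (m : ℕ) (hm : m ≤ ℓ ^ r - 1)
    (L : Type*) [Field L] [Algebra k L] [FiniteDimensional k L]
    (x : Fin (m + 1) → L) (hx : x ≠ 0)
    (hnorm : Algebra.norm L (∑ i : Fin (m + 1), x i ⊗ₜ[k] (a ^ (i : ℕ)) : L ⊗[k] K) = 0) :
    ℓ ∣ Module.finrank k L := by
  classical
  have hint : IsIntegral k a := Algebra.IsIntegral.isIntegral a
  -- power basis of K over k generated by a
  set pb : PowerBasis k K :=
    (Algebra.adjoin.powerBasis hint).map
      ((Subalgebra.equivOfEq _ ⊤ ha).trans Subalgebra.topEquiv) with hpb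
  have hgen : pb.gen = a := by
    simp [hpb, Algebra.adjoin.powerBasis]
  have hdim : pb.dim = ℓ ^ r := by
    rw [← hK, ← pb.finrank]
  set z : L ⊗[k] K := ∑ i : Fin (m + 1), x i ⊗ₜ[k] (a ^ (i : ℕ)) with hz
  have hle : m + 1 ≤ pb.dim := by
    rw [hdim]
    have : 1 ≤ ℓ ^ r := Nat.one_le_pow _ _ hℓ.pos
    omega
  -- basis of L ⊗ K over L
  set b : Module.Basis (Fin pb.dim) L (L ⊗[k] K) := Algebra.TensorProduct.basis L pb.basis with hb
  have hzsum : z = ∑ i : Fin (m + 1), x i • b (Fin.castLE hle i) := by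
    rw [hz]
    refine Finset.sum_congr rfl fun i _ => ?_
    rw [hb, Algebra.TensorProduct.basis_apply, pb.basis_eq_pow, hgen,
      TensorProduct.smul_tmul', smul_eq_mul, mul_one]
    rfl
  have hz0 : z ≠ 0 := by
    intro h
    apply hx
    have li : LinearIndependent L (fun i : Fin (m + 1) => b (Fin.castLE hle i)) :=
      b.linearIndependent.comp _ (Fin.castLE_injective hle)
    funext i
    exact Fintype.linearIndependent_iff.mp li x (by rw [← hzsum, h]) i
  -- z is not a unit
  have hnu : ¬ IsUnit z := by
    intro h
    have := h.map (Algebra.norm (S := L ⊗[k] K) L)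
    rw [hnorm] at this
    exact not_isUnit_zero this
  -- maximal ideal containing z
  obtain ⟨𝔪, hmax, hz𝔪⟩ := (Ideal.span {z}).exists_le_maximal
    (by rwa [Ne, Ideal.span_singleton_eq_top])
  have hz𝔪 : z ∈ 𝔪 := hz𝔪 (Ideal.subset_span rfl)
  set M := (L ⊗[k] K) ⧸ 𝔪 with hM
  haveI : Nontrivial M := Ideal.Quotient.nontrivial_iff.mpr hmax.ne_top
  -- M is finite over L
  have hsurj : Function.Surjective (Ideal.Quotient.mkₐ L 𝔪).toLinearMap :=
    Ideal.Quotient.mk_surjective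
  haveI : FiniteDimensional L M := Module.Finite.of_surjective _ hsurj
  haveI : FiniteDimensional k M := FiniteDimensional.trans k L M
  -- K embeds in M
  -- finrank L M < ℓ ^ r
  have htk : Module.finrank L (L ⊗[k] K) = ℓ ^ r := by
    rw [Module.finrank_baseChange, hK]
  have hfq := Submodule.finrank_quotient (R := L) 𝔪
  have hpos : 0 < Module.finrank L ↥𝔪 := by
    haveI : FiniteDimensional L ↥𝔪 :=
      inferInstanceAs (FiniteDimensional L ↥(𝔪.restrictScalars L))
    rw [Module.finrank_pos_iff_exists_ne_zero]
    exact ⟨⟨z, hz𝔪⟩, by simpa using hz0⟩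
  have hBlt : Module.finrank L M < ℓ ^ r := by
    have hq : Module.finrank L M = ℓ ^ r - Module.finrank L ↥𝔪 := by
      rw [← htk]; exact hfq
    have h1 : 1 ≤ ℓ ^ r := Nat.one_le_pow _ _ hℓ.pos
    omega
  haveI : NoZeroSMulDivisors L M := GroupWithZero.toNoZeroSMulDivisors
  have hBpos : 0 < Module.finrank L M := by
    rw [Module.finrank_pos_iff]
    infer_instance
  -- K embeds in M
  set φ : K →ₐ[k] M := (Ideal.Quotient.mkₐ k 𝔪).comp Algebra.TensorProduct.includeRight with hφ
  letI : Algebra K M := φ.toRingHom.toAlgebra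
  haveI : IsScalarTower k K M := IsScalarTower.of_algebraMap_eq fun c => (φ.commutes c).symm
  haveI : FiniteDimensional K M := Module.Finite.right (F := k) (K := K) (A := M)
  have h1 : Module.finrank k K * Module.finrank K M = Module.finrank k M :=
    Module.finrank_mul_finrank k K M
  have h2 : Module.finrank k L * Module.finrank L M = Module.finrank k M :=
    Module.finrank_mul_finrank k L M
  -- ℓ ^ r divides finrank k M
  have hdvd : ℓ ^ r ∣ Module.finrank k L * Module.finrank L M := by
    rw [h2, ← h1, hK]
    exact Dvd.intro _ rfl
  by_contra hnd
  have hcop : Nat.Coprime (ℓ ^ r) (Module.finrank k L) :=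
    Nat.Coprime.pow_left r ((hℓ.coprime_iff_not_dvd).mpr hnd)
  have := Nat.le_of_dvd hBpos (hcop.dvd_of_dvd_mul_left hdvd)
  omega
end
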